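/- For every real δ with 0 < δ ≤ 1/2, ∫_{δ}^{1/2} ∫_{1/2}^{1−δ} 1/(t·s + (1−t)·(1−s)) dμ(t) dμ(s) ≤ (16/π²)·ln(1/δ), where dμ(t) = dt/(π·√(t·(1−t))). -/

import Mathlib

open MeasureTheory

private lemma integral_inv_sqrt' (a b : ℝ) (ha : 0 < a) (hab : a ≤ b) :
    ∫ t in a..b, (Real.sqrt t)⁻¹ = 2 * Real.sqrt b - 2 * Real.sqrt a := by
  have h : ∀ x ∈ Set.uIcc a b, HasDerivAt (fun t => 2 * Real.sqrt t) ((Real.sqrt x)⁻¹) x := by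
    intro x hx
    have hx0 : 0 < x := lt_of_lt_of_le ha (by rw [Set.uIcc_of_le hab] at hx; exact hx.1)
    have := (Real.hasDerivAt_sqrt hx0.ne').const_mul (2:ℝ)
    exact this.congr_deriv (by ring)
  have hint : IntervalIntegrable (fun t => (Real.sqrt t)⁻¹) volume a b := by
    apply ContinuousOn.intervalIntegrable
    apply ContinuousOn.inv₀ (Real.continuous_sqrt.continuousOn)
    intro x hx
    have hx0 : 0 < x := lt_of_lt_of_le ha (by rw [Set.uIcc_of_le hab] at hx; exact hx.1)
    exact (Real.sqrt_pos.mpr hx0).ne'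
  rw [intervalIntegral.integral_eq_sub_of_hasDerivAt h hint]

private lemma integral_inv_mul_sqrt' (a b : ℝ) (ha : 0 < a) (hab : a ≤ b) :
    ∫ t in a..b, (t * Real.sqrt t)⁻¹ = 2 / Real.sqrt a - 2 / Real.sqrt b := by
  have h : ∀ x ∈ Set.uIcc a b, HasDerivAt (fun t => -2 / Real.sqrt t) ((x * Real.sqrt x)⁻¹) x := by
    intro x hx
    have hx0 : 0 < x := lt_of_lt_of_le ha (by rw [Set.uIcc_of_le hab] at hx; exact hx.1)
    have hs : Real.sqrt x ≠ 0 := (Real.sqrt_pos.mpr hx0).ne'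
    have h1 : HasDerivAt (fun t => (Real.sqrt t)⁻¹)
        (-(1 / (2 * Real.sqrt x)) / (Real.sqrt x) ^ 2) x :=
      (Real.hasDerivAt_sqrt hx0.ne').inv hs
    have h2 : HasDerivAt (fun t => -2 / Real.sqrt t)
        (-2 * (-(1 / (2 * Real.sqrt x)) / (Real.sqrt x) ^ 2)) x := by
      simpa [div_eq_mul_inv] using h1.const_mul (-2 : ℝ)
    convert h2 using 1
    rw [Real.sq_sqrt hx0.le]
    field_simp
  have hint : IntervalIntegrable (fun t => (t * Real.sqrt t)⁻¹) volume a b := by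
    apply ContinuousOn.intervalIntegrable
    apply ContinuousOn.inv₀ (by fun_prop)
    intro x hx
    have hx0 : 0 < x := lt_of_lt_of_le ha (by rw [Set.uIcc_of_le hab] at hx; exact hx.1)
    positivity
  rw [intervalIntegral.integral_eq_sub_of_hasDerivAt h hint]
  ring

private lemma integral_inv_one_sub' (a b : ℝ) (hab : a ≤ b) (hb : b < 1) :
    ∫ s in a..b, (1 - s)⁻¹ = Real.log (1 - a) - Real.log (1 - b) := by
  have h : ∀ x ∈ Set.uIcc a b, HasDerivAt (fun s => -Real.log (1 - s)) ((1 - x)⁻¹) x := by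
    intro x hx
    have hx1 : x < 1 := lt_of_le_of_lt (by rw [Set.uIcc_of_le hab] at hx; exact hx.2) hb
    have h0 : (1 : ℝ) - x ≠ 0 := by intro h; linarith [h]
    have h1 : HasDerivAt (fun s : ℝ => 1 - s) (-1) x := by
      simpa using (hasDerivAt_id x).const_sub 1
    have h2 := ((Real.hasDerivAt_log h0).comp x h1).neg
    exact h2.congr_deriv (by ring)
  have hint : IntervalIntegrable (fun s => (1 - s)⁻¹) volume a b := by
    apply ContinuousOn.intervalIntegrable
    apply ContinuousOn.inv₀ (by fun_prop)
    intro x hx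
    have hx1 : x < 1 := lt_of_le_of_lt (by rw [Set.uIcc_of_le hab] at hx; exact hx.2) hb
    intro h; linarith [h]
  rw [intervalIntegral.integral_eq_sub_of_hasDerivAt h hint]
  ring


/-- Upper estimate: for `0 < δ ≤ 1/2`,
`∫_{δ}^{1/2} ∫_{1/2}^{1−δ} 1/(ts+(1−t)(1−s)) dμ(t) dμ(s) ≤ (16/π²)·ln(1/δ)`,
where `dμ(t) = dt/(π√(t(1−t)))`. -/
theorem kernel_double_integral_upper (δ : ℝ) (hδ : 0 < δ) (hδ' : δ ≤ 1 / 2) :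
    ∫ s in Set.Icc (1 / 2 : ℝ) (1 - δ), ∫ t in Set.Icc δ (1 / 2 : ℝ),
        (1 / (t * s + (1 - t) * (1 - s)))
          * (1 / (Real.pi * Real.sqrt (t * (1 - t))))
          * (1 / (Real.pi * Real.sqrt (s * (1 - s))))
      ≤ (16 / Real.pi ^ 2) * Real.log (1 / δ) := by
  have hπ : (0:ℝ) < Real.pi := Real.pi_pos
  set F : ℝ → ℝ → ℝ := fun s t =>
    (1 / (t * s + (1 - t) * (1 - s))) * (1 / (Real.pi * Real.sqrt (t * (1 - t))))
      * (1 / (Real.pi * Real.sqrt (s * (1 - s)))) with hF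
  -- positivity of the kernel denominator on the region
  have hker : ∀ s ∈ Set.Icc (1/2:ℝ) (1-δ), ∀ t ∈ Set.Icc δ (1/2:ℝ),
      0 < t * s + (1 - t) * (1 - s) := by
    intro s hs t ht
    obtain ⟨hs1, hs2⟩ := hs; obtain ⟨ht1, ht2⟩ := ht
    nlinarith
  -- nonnegativity of F on the region
  have hFnn : ∀ s ∈ Set.Icc (1/2:ℝ) (1-δ), ∀ t ∈ Set.Icc δ (1/2:ℝ), 0 ≤ F s t := by
    intro s hs t ht
    have h1 := hker s hs t ht
    have h2 : (0:ℝ) ≤ 1 / (Real.pi * Real.sqrt (t * (1-t))) := by positivity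
    have h3 : (0:ℝ) ≤ 1 / (Real.pi * Real.sqrt (s * (1-s))) := by positivity
    have h4 : (0:ℝ) ≤ 1 / (t * s + (1 - t) * (1 - s)) := by positivity
    exact mul_nonneg (mul_nonneg h4 h2) h3
  -- continuity of F s in t on Icc δ (1/2), for s in the outer region
  have hFcont : ∀ s ∈ Set.Icc (1/2:ℝ) (1-δ), ContinuousOn (F s) (Set.Icc δ (1/2:ℝ)) := by
    intro s hs
    have c1 : ContinuousOn (fun t : ℝ => 1 / (t * s + (1 - t) * (1 - s))) (Set.Icc δ (1/2:ℝ)) :=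
      ContinuousOn.div continuousOn_const (by fun_prop) (fun t ht => (hker s hs t ht).ne')
    have c2 : ContinuousOn (fun t : ℝ => 1 / (Real.pi * Real.sqrt (t * (1 - t))))
        (Set.Icc δ (1/2:ℝ)) := by
      apply ContinuousOn.div continuousOn_const (by fun_prop)
      intro t ht
      have ht1 : 0 < t := lt_of_lt_of_le hδ ht.1
      have ht2 : t ≤ 1/2 := ht.2
      have : 0 < t * (1 - t) := by nlinarith
      positivity
    exact (c1.mul c2).mul continuousOn_const
  -- the inner bound
  have inner_bound : ∀ s ∈ Set.Icc (1/2:ℝ) (1-δ),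
      (∫ t in Set.Icc δ (1/2:ℝ), F s t) ≤ 16 / Real.pi ^ 2 * (1 - s)⁻¹ := by
    intro s hs
    obtain ⟨hs1, hs2⟩ := hs
    set u : ℝ := 1 - s with hu
    have hu1 : δ ≤ u := by simp only [hu]; linarith
    have hu2 : u ≤ 1/2 := by simp only [hu]; linarith
    have hu0 : 0 < u := lt_of_lt_of_le hδ hu1
    have hsu : Real.sqrt u ≠ 0 := (Real.sqrt_pos.mpr hu0).ne'
    -- pointwise bounds
    have key : ∀ t ∈ Set.Icc δ (1/2:ℝ),
        Real.sqrt t * Real.sqrt u / 2 ≤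
          Real.sqrt (t * (1 - t)) * Real.sqrt (s * (1 - s)) := by
      intro t ht
      obtain ⟨ht1, ht2⟩ := ht
      have ht0 : 0 < t := lt_of_lt_of_le hδ ht1
      have h1 : Real.sqrt (t / 2) ≤ Real.sqrt (t * (1 - t)) :=
        Real.sqrt_le_sqrt (by nlinarith)
      have h2 : Real.sqrt (u / 2) ≤ Real.sqrt (s * (1 - s)) :=
        Real.sqrt_le_sqrt (by simp only [hu]; nlinarith)
      have h4 : Real.sqrt (t / 2) * Real.sqrt (u / 2) = Real.sqrt t * Real.sqrt u / 2 := by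
        rw [show t / 2 = t * (1/2) by ring, show u / 2 = u * (1/2) by ring,
          Real.sqrt_mul ht0.le, Real.sqrt_mul hu0.le]
        have h12 : Real.sqrt (1/2) * Real.sqrt (1/2) = 1/2 :=
          Real.mul_self_sqrt (by norm_num)
        linear_combination (Real.sqrt t * Real.sqrt u) * h12
      calc Real.sqrt t * Real.sqrt u / 2 = Real.sqrt (t/2) * Real.sqrt (u/2) := h4.symm
        _ ≤ Real.sqrt (t * (1 - t)) * Real.sqrt (s * (1 - s)) :=
            mul_le_mul h1 h2 (Real.sqrt_nonneg _) (Real.sqrt_nonneg _)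
    have hb1 : ∀ t ∈ Set.Icc δ (1/2:ℝ),
        F s t ≤ 4 / Real.pi ^ 2 * (u * Real.sqrt u)⁻¹ * (Real.sqrt t)⁻¹ := by
      intro t ht
      obtain ⟨ht1, ht2⟩ := ht
      have ht0 : 0 < t := lt_of_lt_of_le hδ ht1
      have hst : Real.sqrt t ≠ 0 := (Real.sqrt_pos.mpr ht0).ne'
      have hK : 0 < t * s + (1 - t) * (1 - s) := hker s ⟨hs1, hs2⟩ t ⟨ht1, ht2⟩
      have hKu : u / 2 ≤ t * s + (1 - t) * (1 - s) := by simp only [hu]; nlinarith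
      have hkey := key t ⟨ht1, ht2⟩
      have hW1 : 0 ≤ Real.sqrt (t * (1 - t)) := Real.sqrt_nonneg _
      have hW2 : 0 ≤ Real.sqrt (s * (1 - s)) := Real.sqrt_nonneg _
      have hW1' : 0 < Real.sqrt (t * (1 - t)) := Real.sqrt_pos.mpr (by nlinarith)
      have hW2' : 0 < Real.sqrt (s * (1 - s)) := Real.sqrt_pos.mpr (by nlinarith)
      have hsu' : 0 < Real.sqrt u := Real.sqrt_pos.mpr hu0
      have hst' : 0 < Real.sqrt t := Real.sqrt_pos.mpr ht0
      have hFt : F s t = 1 / ((t * s + (1 - t) * (1 - s)) *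
          (Real.pi * Real.sqrt (t * (1 - t))) * (Real.pi * Real.sqrt (s * (1 - s)))) := by
        simp only [hF]; rw [one_div, one_div, one_div, ← mul_inv, ← mul_inv]; rw [one_div]
      have hrhs : (4:ℝ) / Real.pi ^ 2 * (u * Real.sqrt u)⁻¹ * (Real.sqrt t)⁻¹
          = 4 / (Real.pi ^ 2 * (u * Real.sqrt u) * Real.sqrt t) := by
        field_simp
      rw [hFt, hrhs]
      rw [div_le_div_iff₀ (mul_pos (mul_pos hK (mul_pos hπ hW1')) (mul_pos hπ hW2'))
        (mul_pos (mul_pos (pow_pos hπ 2) (mul_pos hu0 hsu')) hst')]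
      have step2 : (u / 2) * (Real.sqrt t * Real.sqrt u / 2) ≤
          (t * s + (1 - t) * (1 - s)) *
            (Real.sqrt (t * (1 - t)) * Real.sqrt (s * (1 - s))) :=
        mul_le_mul hKu hkey (by positivity) hK.le
      calc 1 * (Real.pi ^ 2 * (u * Real.sqrt u) * Real.sqrt t)
          = 4 * Real.pi ^ 2 * ((u / 2) * (Real.sqrt t * Real.sqrt u / 2)) := by ring
        _ ≤ 4 * Real.pi ^ 2 * ((t * s + (1 - t) * (1 - s)) *
              (Real.sqrt (t * (1 - t)) * Real.sqrt (s * (1 - s)))) :=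
            mul_le_mul_of_nonneg_left step2 (by positivity)
        _ = 4 * ((t * s + (1 - t) * (1 - s)) * (Real.pi * Real.sqrt (t * (1 - t)))
              * (Real.pi * Real.sqrt (s * (1 - s)))) := by ring
    have hb2 : ∀ t ∈ Set.Icc δ (1/2:ℝ),
        F s t ≤ 4 / Real.pi ^ 2 * (Real.sqrt u)⁻¹ * (t * Real.sqrt t)⁻¹ := by
      intro t ht
      obtain ⟨ht1, ht2⟩ := ht
      have ht0 : 0 < t := lt_of_lt_of_le hδ ht1
      have hst : Real.sqrt t ≠ 0 := (Real.sqrt_pos.mpr ht0).ne'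
      have hK : 0 < t * s + (1 - t) * (1 - s) := hker s ⟨hs1, hs2⟩ t ⟨ht1, ht2⟩
      have hKt : t / 2 ≤ t * s + (1 - t) * (1 - s) := by nlinarith
      have hkey := key t ⟨ht1, ht2⟩
      have hW1' : 0 < Real.sqrt (t * (1 - t)) := Real.sqrt_pos.mpr (by nlinarith)
      have hW2' : 0 < Real.sqrt (s * (1 - s)) := Real.sqrt_pos.mpr (by nlinarith)
      have hsu' : 0 < Real.sqrt u := Real.sqrt_pos.mpr hu0
      have hst' : 0 < Real.sqrt t := Real.sqrt_pos.mpr ht0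
      have hFt : F s t = 1 / ((t * s + (1 - t) * (1 - s)) *
          (Real.pi * Real.sqrt (t * (1 - t))) * (Real.pi * Real.sqrt (s * (1 - s)))) := by
        simp only [hF]; rw [one_div, one_div, one_div, ← mul_inv, ← mul_inv]; rw [one_div]
      have hrhs : (4:ℝ) / Real.pi ^ 2 * (Real.sqrt u)⁻¹ * (t * Real.sqrt t)⁻¹
          = 4 / (Real.pi ^ 2 * Real.sqrt u * (t * Real.sqrt t)) := by
        field_simp
      rw [hFt, hrhs]
      rw [div_le_div_iff₀ (mul_pos (mul_pos hK (mul_pos hπ hW1')) (mul_pos hπ hW2'))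
        (mul_pos (mul_pos (pow_pos hπ 2) hsu') (mul_pos ht0 hst'))]
      have step2 : (t / 2) * (Real.sqrt t * Real.sqrt u / 2) ≤
          (t * s + (1 - t) * (1 - s)) *
            (Real.sqrt (t * (1 - t)) * Real.sqrt (s * (1 - s))) :=
        mul_le_mul hKt hkey (by positivity) hK.le
      calc 1 * (Real.pi ^ 2 * Real.sqrt u * (t * Real.sqrt t))
          = 4 * Real.pi ^ 2 * ((t / 2) * (Real.sqrt t * Real.sqrt u / 2)) := by ring
        _ ≤ 4 * Real.pi ^ 2 * ((t * s + (1 - t) * (1 - s)) *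
              (Real.sqrt (t * (1 - t)) * Real.sqrt (s * (1 - s)))) :=
            mul_le_mul_of_nonneg_left step2 (by positivity)
        _ = 4 * ((t * s + (1 - t) * (1 - s)) * (Real.pi * Real.sqrt (t * (1 - t)))
              * (Real.pi * Real.sqrt (s * (1 - s)))) := by ring
    -- integrability
    have hFi : IntervalIntegrable (F s) volume δ (1/2 : ℝ) :=
      (hFcont s ⟨hs1, hs2⟩).intervalIntegrable_of_Icc hδ'
    have hFi1 : IntervalIntegrable (F s) volume δ u :=
      hFi.mono_set (by rw [Set.uIcc_of_le hu1, Set.uIcc_of_le hδ']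
                       exact Set.Icc_subset_Icc le_rfl hu2)
    have hFi2 : IntervalIntegrable (F s) volume u (1/2 : ℝ) :=
      hFi.mono_set (by rw [Set.uIcc_of_le hu2, Set.uIcc_of_le hδ']
                       exact Set.Icc_subset_Icc hu1 le_rfl)
    have hG1 : IntervalIntegrable
        (fun t => 4 / Real.pi ^ 2 * (u * Real.sqrt u)⁻¹ * (Real.sqrt t)⁻¹) volume δ u := by
      apply ContinuousOn.intervalIntegrable
      apply ContinuousOn.mul continuousOn_const
      apply ContinuousOn.inv₀ (Real.continuous_sqrt.continuousOn)
      intro x hx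
      rw [Set.uIcc_of_le hu1] at hx
      have : 0 < x := lt_of_lt_of_le hδ hx.1
      positivity
    have hG2 : IntervalIntegrable
        (fun t => 4 / Real.pi ^ 2 * (Real.sqrt u)⁻¹ * (t * Real.sqrt t)⁻¹) volume u (1/2:ℝ) := by
      apply ContinuousOn.intervalIntegrable
      apply ContinuousOn.mul continuousOn_const
      apply ContinuousOn.inv₀ (by fun_prop)
      intro x hx
      rw [Set.uIcc_of_le hu2] at hx
      have : 0 < x := lt_of_lt_of_le hu0 hx.1
      positivity
    -- split and bound
    have hsplit : (∫ t in Set.Icc δ (1/2:ℝ), F s t)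
        = (∫ t in δ..u, F s t) + ∫ t in u..(1/2:ℝ), F s t := by
      rw [MeasureTheory.integral_Icc_eq_integral_Ioc, ← intervalIntegral.integral_of_le hδ']
      exact (intervalIntegral.integral_add_adjacent_intervals hFi1 hFi2).symm
    have hI1 : (∫ t in δ..u, F s t) ≤ 8 / Real.pi ^ 2 * u⁻¹ := by
      have := intervalIntegral.integral_mono_on hu1 hFi1 hG1
        (fun t ht => hb1 t (Set.Icc_subset_Icc le_rfl hu2 ht))
      rw [intervalIntegral.integral_const_mul, integral_inv_sqrt' δ u hδ hu1] at this
      refine this.trans ?_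
      have h1 : 2 * Real.sqrt u - 2 * Real.sqrt δ ≤ 2 * Real.sqrt u := by
        nlinarith [Real.sqrt_nonneg δ]
      have h2 : 4 / Real.pi ^ 2 * (u * Real.sqrt u)⁻¹ * (2 * Real.sqrt u)
          = 8 / Real.pi ^ 2 * u⁻¹ := by
        field_simp
        ring
      calc 4 / Real.pi ^ 2 * (u * Real.sqrt u)⁻¹ * (2 * Real.sqrt u - 2 * Real.sqrt δ)
          ≤ 4 / Real.pi ^ 2 * (u * Real.sqrt u)⁻¹ * (2 * Real.sqrt u) := by
            apply mul_le_mul_of_nonneg_left h1 (by positivity)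
        _ = 8 / Real.pi ^ 2 * u⁻¹ := h2
    have hI2 : (∫ t in u..(1/2:ℝ), F s t) ≤ 8 / Real.pi ^ 2 * u⁻¹ := by
      have := intervalIntegral.integral_mono_on hu2 hFi2 hG2
        (fun t ht => hb2 t (Set.Icc_subset_Icc hu1 le_rfl ht))
      rw [intervalIntegral.integral_const_mul, integral_inv_mul_sqrt' u (1/2) hu0 hu2] at this
      refine this.trans ?_
      have h1 : 2 / Real.sqrt u - 2 / Real.sqrt (1/2) ≤ 2 / Real.sqrt u := by
        have : 0 ≤ 2 / Real.sqrt (1/2:ℝ) := by positivity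
        linarith
      have h2 : 4 / Real.pi ^ 2 * (Real.sqrt u)⁻¹ * (2 / Real.sqrt u)
          = 8 / Real.pi ^ 2 * u⁻¹ := by
        have huu : Real.sqrt u * Real.sqrt u = u := Real.mul_self_sqrt hu0.le
        have hinv : u⁻¹ = (Real.sqrt u)⁻¹ * (Real.sqrt u)⁻¹ := by rw [← mul_inv, huu]
        rw [hinv]
        ring
      calc 4 / Real.pi ^ 2 * (Real.sqrt u)⁻¹ * (2 / Real.sqrt u - 2 / Real.sqrt (1/2))
          ≤ 4 / Real.pi ^ 2 * (Real.sqrt u)⁻¹ * (2 / Real.sqrt u) := by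
            apply mul_le_mul_of_nonneg_left h1 (by positivity)
        _ = 8 / Real.pi ^ 2 * u⁻¹ := h2
    rw [hsplit]
    have : (8:ℝ) / Real.pi ^ 2 * u⁻¹ + 8 / Real.pi ^ 2 * u⁻¹ = 16 / Real.pi ^ 2 * u⁻¹ := by ring
    linarith [hI1, hI2]
  -- outer estimate
  have h12 : (1/2 : ℝ) ≤ 1 - δ := by linarith
  have hout : (∫ s in Set.Icc (1/2:ℝ) (1-δ), ∫ t in Set.Icc δ (1/2:ℝ), F s t)
      ≤ ∫ s in Set.Icc (1/2:ℝ) (1-δ), 16 / Real.pi ^ 2 * (1 - s)⁻¹ := by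
    apply MeasureTheory.integral_mono_of_nonneg
    · filter_upwards [ae_restrict_mem measurableSet_Icc] with s hs
      exact MeasureTheory.setIntegral_nonneg measurableSet_Icc (fun t ht => hFnn s hs t ht)
    · apply ContinuousOn.integrableOn_Icc
      apply ContinuousOn.mul continuousOn_const
      apply ContinuousOn.inv₀ (by fun_prop)
      intro x hx
      have : x ≤ 1 - δ := hx.2
      intro h; have : (1:ℝ) - x = 0 := h; linarith
    · filter_upwards [ae_restrict_mem measurableSet_Icc] with s hs
      exact inner_bound s hs
  have hcomp : (∫ s in Set.Icc (1/2:ℝ) (1-δ), 16 / Real.pi ^ 2 * (1 - s)⁻¹)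
      = 16 / Real.pi ^ 2 * (Real.log (1/2) - Real.log δ) := by
    rw [MeasureTheory.integral_Icc_eq_integral_Ioc, ← intervalIntegral.integral_of_le h12,
      intervalIntegral.integral_const_mul,
      integral_inv_one_sub' (1/2) (1-δ) h12 (by linarith)]
    norm_num
  have hlog : Real.log (1/δ) = - Real.log δ := by
    rw [one_div, Real.log_inv]
  have hlog2 : Real.log (1/2 : ℝ) ≤ 0 := Real.log_nonpos (by norm_num) (by norm_num)
  calc (∫ s in Set.Icc (1/2:ℝ) (1-δ), ∫ t in Set.Icc δ (1/2:ℝ), F s t)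
      ≤ 16 / Real.pi ^ 2 * (Real.log (1/2) - Real.log δ) := hout.trans (le_of_eq hcomp)
    _ ≤ 16 / Real.pi ^ 2 * Real.log (1/δ) := by
        rw [hlog]
        apply mul_le_mul_of_nonneg_left (by linarith) (by positivity)
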